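/- If the adjacency matrix of a connected graph G is invertible, then for every vertex u of G, the vertices (0,u) and (1,u) are strongly cospectral in the blow-up ⊗^2 G. -/

import Mathlib

/-- The blow-up of `n` copies of `G`. -/
def SimpleGraph.blowup {V : Type*} (n : ℕ) (G : SimpleGraph V) : SimpleGraph (ZMod n × V) :=
  G.comap Prod.snd

instance {V : Type*} {n : ℕ} (G : SimpleGraph V) [h : DecidableRel G.Adj] :
    DecidableRel (G.blowup n).Adj := fun x y => h x.2 y.2

/-- Vertices `x` and `y` are strongly cospectral for the symmetric matrix `B`. -/
def StronglyCospectral {W : Type*} [Fintype W] (B : Matrix W W ℝ) (x y : W) : Prop :=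
  ∀ μ : ℝ, ∃ ε : ℝ, (ε = 1 ∨ ε = -1) ∧ ∀ v : W → ℝ, B.mulVec v = μ • v → v x = ε * v y

lemma blowup_mulVec_eq {V : Type*} [Fintype V] [DecidableEq V]
    (G : SimpleGraph V) [DecidableRel G.Adj] (v : ZMod 2 × V → ℝ) (i : ZMod 2) (x : V) :
    ((G.blowup 2).adjMatrix ℝ).mulVec v (i, x)
      = (G.adjMatrix ℝ).mulVec (fun y => v (0, y) + v (1, y)) x := by
  simp only [Matrix.mulVec, dotProduct, SimpleGraph.adjMatrix_apply,
    SimpleGraph.blowup, SimpleGraph.comap_adj, Fintype.sum_prod_type]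
  rw [show (Finset.univ : Finset (ZMod 2)) = {0, 1} by decide]
  simp [Finset.sum_add_distrib, mul_add, SimpleGraph.adjMatrix, Matrix.of_apply]

/-- If the adjacency matrix of a connected graph `G` is invertible, then for every vertex `u`,
the vertices `(0,u)` and `(1,u)` are strongly cospectral in `⊗² G`. -/
theorem blowup_two_strongly_cospectral_of_invertible {V : Type*} [Fintype V] [DecidableEq V]
    (G : SimpleGraph V) [DecidableRel G.Adj] (hG : G.Connected)
    (hA : IsUnit (G.adjMatrix ℝ)) (u : V) :
    StronglyCospectral ((G.blowup 2).adjMatrix ℝ) (0, u) (1, u) := by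
  intro μ
  rcases eq_or_ne μ 0 with hμ | hμ
  · refine ⟨-1, Or.inr rfl, fun v hv => ?_⟩
    have hinj := Matrix.mulVec_injective_iff_isUnit.2 hA
    have hs : (G.adjMatrix ℝ).mulVec (fun y => v (0, y) + v (1, y)) = (G.adjMatrix ℝ).mulVec 0 := by
      funext x
      rw [← blowup_mulVec_eq G v 0 x, hv, Matrix.mulVec_zero]
      simp [hμ]
    have := hinj hs
    have h0 : v (0, u) + v (1, u) = 0 := by
      have := congrFun this u
      simpa using this
    linarith
  · refine ⟨1, Or.inl rfl, fun v hv => ?_⟩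
    have h0 := congrFun hv (0, u)
    have h1 := congrFun hv (1, u)
    rw [blowup_mulVec_eq] at h0 h1
    have : μ • v (0, u) = μ • v (1, u) := by
      simp only [Pi.smul_apply] at h0 h1
      rw [← h0, ← h1]
    have := mul_left_cancel₀ hμ (by simpa [smul_eq_mul] using this)
    simpa using this
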